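/- arXiv:0908.0506 — 2 statements merged into one kernel-verified Lean document; each statement's English description precedes it below -/
import Mathlib

section
/- For any J ∈ ℝ^𝒳 and any initial distribution η on 𝒳, with s = (J − TJ)^+, the expected cost of the greedy policy satisfies η^⊤(J_{μ_J} − J) = η^⊤ Δ_{μ_J} (TJ − J) ≤ (1/(1−α)) ν(η,J)^⊤ (J* − J + Δ* s), where Δ* = (I − α P_{μ*})^{−1}. -/
open Finset Matrix

noncomputable section

/-- The Bellman operator. -/
def bellmanT {X A : Type*} [Fintype X] [Fintype A] [Nonempty A]
    (g : X → A → ℝ) (P : A → X → X → ℝ) (α : ℝ) (J : X → ℝ) : X → ℝ :=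
  fun x => Finset.univ.inf' Finset.univ_nonempty fun a => g x a + α * ∑ x', P a x x' * J x'

/-- The Bellman operator of a stationary policy. -/
def polT {X A : Type*} [Fintype X]
    (g : X → A → ℝ) (P : A → X → X → ℝ) (α : ℝ) (μ : X → A) (J : X → ℝ) : X → ℝ :=
  fun x => g x (μ x) + α * ∑ x', P (μ x) x x' * J x'

/-- Transition matrix of a stationary policy. -/
def polMat {X A : Type*} (P : A → X → X → ℝ) (μ : X → A) : Matrix X X ℝ :=
  Matrix.of fun x x' => P (μ x) x x'

/-- Δ_μ = Σ_k (α P_μ)^k = (I - α P_μ)⁻¹. -/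
def deltaMat {X A : Type*} [Fintype X] [DecidableEq X]
    (P : A → X → X → ℝ) (α : ℝ) (μ : X → A) : Matrix X X ℝ :=
  ∑' k : ℕ, (α • polMat P μ) ^ k

/-- π_{μ,ν} = (1-α) ν^⊤ (I - α P_μ)⁻¹. -/
def piDist {X A : Type*} [Fintype X] [DecidableEq X]
    (P : A → X → X → ℝ) (α : ℝ) (μ : X → A) (ν : X → ℝ) : X → ℝ :=
  fun x => (1 - α) * ∑ x0, ν x0 * deltaMat P α μ x0 x

/-- Cost-to-go of policy μ: Σ_t α^t P_μ^t g_μ. -/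
def Jpol {X A : Type*} [Fintype X] [DecidableEq X]
    (g : X → A → ℝ) (P : A → X → X → ℝ) (α : ℝ) (μ : X → A) : X → ℝ :=
  fun x => ∑' t : ℕ, α ^ t * (((polMat P μ) ^ t) *ᵥ (fun y => g y (μ y))) x

/-- Linear combination of basis functions. -/
def phiR {X : Type*} {K : ℕ} (Φ : X → Fin K → ℝ) (r : Fin K → ℝ) : X → ℝ :=
  fun x => ∑ i, Φ x i * r i

/-- ν-weighted 1-norm. -/
def wnorm1 {X : Type*} [Fintype X] (ν J : X → ℝ) : ℝ := ∑ x, ν x * |J x|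

/-- Max norm. -/
def supNorm {X : Type*} [Fintype X] [Nonempty X] (J : X → ℝ) : ℝ :=
  Finset.univ.sup' Finset.univ_nonempty fun x => |J x|

/-- ψ-weighted max norm ‖J‖_{∞,1/ψ}. -/
def wsupNorm {X : Type*} [Fintype X] [Nonempty X] (ψ J : X → ℝ) : ℝ :=
  Finset.univ.sup' Finset.univ_nonempty fun x => |J x| / ψ x

/-- β(ψ) = max_{x,a} (Σ_{x'} P_a(x,x') ψ(x')) / ψ(x). -/
def betaPsi {X A : Type*} [Fintype X] [Nonempty X] [Fintype A] [Nonempty A]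
    (P : A → X → X → ℝ) (ψ : X → ℝ) : ℝ :=
  Finset.univ.sup' Finset.univ_nonempty fun p : X × A => (∑ x', P p.2 p.1 x' * ψ x') / ψ p.1

/-- Feasible values of the LP defining ℓ(r,θ). -/
def ellSet {X A : Type*} [Fintype X] [Fintype A] [Nonempty A] {K : ℕ}
    (g : X → A → ℝ) (P : A → X → X → ℝ) (α : ℝ) (π : X → ℝ)
    (Φ : X → Fin K → ℝ) (r : Fin K → ℝ) (θ : ℝ) : Set ℝ :=
  {v | ∃ (s : X → ℝ) (γ : ℝ), v = γ / (1 - α) ∧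
    (∀ x, phiR Φ r x - bellmanT g P α (phiR Φ r) x ≤ s x + γ) ∧
    (∑ x, π x * s x ≤ θ) ∧ (∀ x, 0 ≤ s x)}

/-- ℓ(r,θ): optimal value of the LP (3.2). -/
def ellVal {X A : Type*} [Fintype X] [Fintype A] [Nonempty A] {K : ℕ}
    (g : X → A → ℝ) (P : A → X → X → ℝ) (α : ℝ) (π : X → ℝ)
    (Φ : X → Fin K → ℝ) (r : Fin K → ℝ) (θ : ℝ) : ℝ :=
  sInf (ellSet g P α π Φ r θ)


section Helpers

variable {X A : Type*} [Fintype X] [DecidableEq X]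

lemma Qpow_nonneg (P : A → X → X → ℝ) {α : ℝ} (μ : X → A)
    (hP0 : ∀ a x x', 0 ≤ P a x x') (hα0 : 0 ≤ α) (k : ℕ) (x y : X) :
    0 ≤ ((α • polMat P μ) ^ k) x y := by
  induction k generalizing x y with
  | zero =>
    rw [pow_zero, Matrix.one_apply]
    split <;> norm_num
  | succ k ih =>
    rw [pow_succ, Matrix.mul_apply]
    refine Finset.sum_nonneg fun z _ => mul_nonneg (ih x z) ?_
    simpa [polMat, Matrix.smul_apply] using mul_nonneg hα0 (hP0 (μ z) z y)

lemma Qpow_rowsum (P : A → X → X → ℝ) {α : ℝ} (μ : X → A)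
    (hP1 : ∀ a x, ∑ x', P a x x' = 1) (k : ℕ) (x : X) :
    ∑ y, ((α • polMat P μ) ^ k) x y = α ^ k := by
  induction k generalizing x with
  | zero => simp [Matrix.one_apply]
  | succ k ih =>
    rw [pow_succ]
    simp only [Matrix.mul_apply]
    rw [Finset.sum_comm]
    have h : ∀ z, ∑ y, ((α • polMat P μ) ^ k) x z * (α • polMat P μ) z y
        = ((α • polMat P μ) ^ k) x z * α := by
      intro z
      rw [← Finset.mul_sum]
      congr 1
      simp only [Matrix.smul_apply, polMat, Matrix.of_apply, smul_eq_mul]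
      rw [← Finset.mul_sum, hP1, mul_one]
    rw [Finset.sum_congr rfl fun z _ => h z, ← Finset.sum_mul, ih, pow_succ]

lemma Qpow_le (P : A → X → X → ℝ) {α : ℝ} (μ : X → A)
    (hP0 : ∀ a x x', 0 ≤ P a x x') (hP1 : ∀ a x, ∑ x', P a x x' = 1)
    (hα0 : 0 ≤ α) (k : ℕ) (x y : X) :
    ((α • polMat P μ) ^ k) x y ≤ α ^ k := by
  rw [← Qpow_rowsum P μ hP1 k x]
  exact Finset.single_le_sum (fun z _ => Qpow_nonneg P μ hP0 hα0 k x z) (Finset.mem_univ y)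

lemma Qpow_entry_summable (P : A → X → X → ℝ) {α : ℝ} (μ : X → A)
    (hP0 : ∀ a x x', 0 ≤ P a x x') (hP1 : ∀ a x, ∑ x', P a x x' = 1)
    (hα0 : 0 ≤ α) (hα1 : α < 1) (x y : X) :
    Summable fun k => ((α • polMat P μ) ^ k) x y :=
  Summable.of_nonneg_of_le (fun k => Qpow_nonneg P μ hP0 hα0 k x y)
    (fun k => Qpow_le P μ hP0 hP1 hα0 k x y) (summable_geometric_of_lt_one hα0 hα1)

lemma Qpow_summable (P : A → X → X → ℝ) {α : ℝ} (μ : X → A)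
    (hP0 : ∀ a x x', 0 ≤ P a x x') (hP1 : ∀ a x, ∑ x', P a x x' = 1)
    (hα0 : 0 ≤ α) (hα1 : α < 1) :
    Summable fun k : ℕ => (α • polMat P μ) ^ k := by
  rw [show (Summable fun k : ℕ => (α • polMat P μ) ^ k) ↔ _ from Pi.summable]
  intro x
  rw [show (Summable fun k : ℕ => ((α • polMat P μ) ^ k) x) ↔ _ from Pi.summable]
  intro y
  exact Qpow_entry_summable P μ hP0 hP1 hα0 hα1 x y

lemma deltaMat_apply (P : A → X → X → ℝ) {α : ℝ} (μ : X → A)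
    (hP0 : ∀ a x x', 0 ≤ P a x x') (hP1 : ∀ a x, ∑ x', P a x x' = 1)
    (hα0 : 0 ≤ α) (hα1 : α < 1) (x y : X) :
    deltaMat P α μ x y = ∑' k : ℕ, ((α • polMat P μ) ^ k) x y := by
  have hs := Qpow_summable P μ hP0 hP1 hα0 hα1
  unfold deltaMat
  exact (congrFun (tsum_apply hs (x := x)) y).trans (tsum_apply (Pi.summable.1 hs x))

lemma deltaMat_nonneg (P : A → X → X → ℝ) {α : ℝ} (μ : X → A)
    (hP0 : ∀ a x x', 0 ≤ P a x x') (hP1 : ∀ a x, ∑ x', P a x x' = 1)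
    (hα0 : 0 ≤ α) (hα1 : α < 1) (x y : X) :
    0 ≤ deltaMat P α μ x y := by
  rw [deltaMat_apply P μ hP0 hP1 hα0 hα1]
  exact tsum_nonneg fun k => Qpow_nonneg P μ hP0 hα0 k x y

lemma deltaMat_mul (P : A → X → X → ℝ) {α : ℝ} (μ : X → A)
    (hP0 : ∀ a x x', 0 ≤ P a x x') (hP1 : ∀ a x, ∑ x', P a x x' = 1)
    (hα0 : 0 ≤ α) (hα1 : α < 1) :
    deltaMat P α μ * (1 - α • polMat P μ) = 1 := by
  set Q := α • polMat P μ with hQ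
  ext x y
  rw [Matrix.mul_apply]
  have h1 : Summable fun k => (Q ^ k) x y := Qpow_entry_summable P μ hP0 hP1 hα0 hα1 x y
  have h2 : Summable fun k => (Q ^ (k + 1)) x y := by
    have := (summable_nat_add_iff 1).2 h1
    simpa using this
  calc ∑ z, deltaMat P α μ x z * (1 - Q) z y
      = ∑ z, ∑' k : ℕ, (Q ^ k) x z * (1 - Q) z y := by
        refine Finset.sum_congr rfl fun z _ => ?_
        rw [deltaMat_apply P μ hP0 hP1 hα0 hα1, tsum_mul_right]
    _ = ∑' k : ℕ, ∑ z, (Q ^ k) x z * (1 - Q) z y := by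
        refine (Summable.tsum_finsetSum fun z _ => ?_).symm
        exact (Qpow_entry_summable P μ hP0 hP1 hα0 hα1 x z).mul_right _
    _ = ∑' k : ℕ, ((Q ^ k) x y - (Q ^ (k + 1)) x y) := by
        refine tsum_congr fun k => ?_
        rw [← Matrix.mul_apply, mul_one_sub, ← pow_succ, Matrix.sub_apply]
    _ = (∑' k : ℕ, (Q ^ k) x y) - ∑' k : ℕ, (Q ^ (k + 1)) x y := Summable.tsum_sub h1 h2
    _ = (1 : Matrix X X ℝ) x y := by
        rw [Summable.tsum_eq_zero_add h1]
        simp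

lemma deltaMat_mulVec_cancel (P : A → X → X → ℝ) {α : ℝ} (μ : X → A)
    (hP0 : ∀ a x x', 0 ≤ P a x x') (hP1 : ∀ a x, ∑ x', P a x x' = 1)
    (hα0 : 0 ≤ α) (hα1 : α < 1) (v : X → ℝ) :
    deltaMat P α μ *ᵥ ((1 - α • polMat P μ) *ᵥ v) = v := by
  rw [Matrix.mulVec_mulVec, deltaMat_mul P μ hP0 hP1 hα0 hα1, Matrix.one_mulVec]

lemma Jpol_eq (g : X → A → ℝ) (P : A → X → X → ℝ) {α : ℝ} (μ : X → A)
    (hP0 : ∀ a x x', 0 ≤ P a x x') (hP1 : ∀ a x, ∑ x', P a x x' = 1)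
    (hα0 : 0 ≤ α) (hα1 : α < 1) :
    Jpol g P α μ = deltaMat P α μ *ᵥ (fun y => g y (μ y)) := by
  funext x
  set Q := α • polMat P μ with hQ
  have key : ∀ k : ℕ, (Q ^ k *ᵥ fun y => g y (μ y)) x
      = α ^ k * ((polMat P μ ^ k) *ᵥ fun y => g y (μ y)) x := by
    intro k
    rw [hQ, smul_pow, smul_mulVec]
    simp
  calc Jpol g P α μ x
      = ∑' k : ℕ, (Q ^ k *ᵥ fun y => g y (μ y)) x := by
        unfold Jpol
        exact tsum_congr fun k => (key k).symm
    _ = ∑' k : ℕ, ∑ y, (Q ^ k) x y * g y (μ y) := by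
        refine tsum_congr fun k => ?_
        simp [Matrix.mulVec, dotProduct]
    _ = ∑ y, ∑' k : ℕ, (Q ^ k) x y * g y (μ y) := by
        refine Summable.tsum_finsetSum fun y _ => ?_
        exact (Qpow_entry_summable P μ hP0 hP1 hα0 hα1 x y).mul_right _
    _ = ∑ y, deltaMat P α μ x y * g y (μ y) := by
        refine Finset.sum_congr rfl fun y _ => ?_
        rw [deltaMat_apply P μ hP0 hP1 hα0 hα1, tsum_mul_right]
    _ = (deltaMat P α μ *ᵥ fun y => g y (μ y)) x := by
        simp [Matrix.mulVec, dotProduct]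

lemma polT_apply (g : X → A → ℝ) (P : A → X → X → ℝ) (α : ℝ) (μ : X → A) (J : X → ℝ) (x : X) :
    polT g P α μ J x = g x (μ x) + ((α • polMat P μ) *ᵥ J) x := by
  simp [polT, Matrix.mulVec, dotProduct, polMat, Finset.mul_sum, mul_assoc]

lemma mulVec_mono {X : Type*} [Fintype X] (M : Matrix X X ℝ) (hM : ∀ x y, 0 ≤ M x y)
    {v w : X → ℝ} (h : ∀ y, v y ≤ w y) (x : X) : (M *ᵥ v) x ≤ (M *ᵥ w) x := by
  simp only [Matrix.mulVec, dotProduct]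
  exact Finset.sum_le_sum fun y _ => mul_le_mul_of_nonneg_left (h y) (hM x y)

end Helpers

/-- with s = (J - TJ)^+,
η^⊤(J_{μ_J} - J) = η^⊤ Δ_{μ_J} (TJ - J) ≤ (1/(1-α)) ν(η,J)^⊤ (J* - J + Δ* s). -/
theorem greedy_policy_cost_identity_and_bound
    {X A : Type*} [Fintype X] [Nonempty X] [Fintype A] [Nonempty A] [DecidableEq X]
    (g : X → A → ℝ) (P : A → X → X → ℝ) (α : ℝ)
    (hα0 : 0 < α) (hα1 : α < 1)
    (hP0 : ∀ a x x', 0 ≤ P a x x') (hP1 : ∀ a x, ∑ x', P a x x' = 1)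
    (Jstar : X → ℝ) (hJstar : bellmanT g P α Jstar = Jstar)
    (μs : X → A) (hμs : polT g P α μs Jstar = bellmanT g P α Jstar)
    (J : X → ℝ) (μJ : X → A) (hμJ : polT g P α μJ J = bellmanT g P α J)
    (η : X → ℝ) (hη0 : ∀ x, 0 ≤ η x) (hη1 : ∑ x, η x = 1) :
    (∑ x, η x * (Jpol g P α μJ x - J x) =
      ∑ x, η x * (deltaMat P α μJ *ᵥ (fun y => bellmanT g P α J y - J y)) x) ∧
    (∑ x, η x * (Jpol g P α μJ x - J x) ≤
      (1 / (1 - α)) * ∑ x, piDist P α μJ η x *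
        (Jstar x - J x +
          (deltaMat P α μs *ᵥ (fun y => max (J y - bellmanT g P α J y) 0)) x)) := by
  have hα0' : (0:ℝ) ≤ α := le_of_lt hα0
  have h1α : (0:ℝ) < 1 - α := by linarith
  set Q : Matrix X X ℝ := α • polMat P μJ with hQdef
  set D : Matrix X X ℝ := deltaMat P α μJ with hDdef
  set Qs : Matrix X X ℝ := α • polMat P μs with hQsdef
  set Ds : Matrix X X ℝ := deltaMat P α μs with hDsdef
  set s : X → ℝ := fun y => max (J y - bellmanT g P α J y) 0 with hsdef
  -- Part 1: pointwise identity
  have hpt : ∀ x, Jpol g P α μJ x - J x = (D *ᵥ fun y => bellmanT g P α J y - J y) x := by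
    intro x
    have hw : (fun y => bellmanT g P α J y - J y)
        = (fun y => g y (μJ y)) - ((1 - Q) *ᵥ J) := by
      funext y
      have h1 : bellmanT g P α J y = polT g P α μJ J y := (congrFun hμJ y).symm
      rw [Pi.sub_apply, h1, polT_apply]
      simp only [Matrix.sub_mulVec, Matrix.one_mulVec, Pi.sub_apply]
      ring
    rw [hw, Matrix.mulVec_sub, deltaMat_mulVec_cancel P μJ hP0 hP1 hα0' hα1,
      ← Jpol_eq g P μJ hP0 hP1 hα0' hα1, Pi.sub_apply]
  have part1 : ∑ x, η x * (Jpol g P α μJ x - J x) =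
      ∑ x, η x * (D *ᵥ fun y => bellmanT g P α J y - J y) x :=
    Finset.sum_congr rfl fun x _ => by rw [hpt x]
  refine ⟨part1, ?_⟩
  -- the swap identity
  have hswap : ∀ w : X → ℝ, (1/(1-α)) * ∑ y, piDist P α μJ η y * w y
      = ∑ x, η x * (D *ᵥ w) x := by
    intro w
    rw [Finset.mul_sum]
    calc ∑ y, (1/(1-α)) * (piDist P α μJ η y * w y)
        = ∑ y, ∑ x, η x * deltaMat P α μJ x y * w y := by
          refine Finset.sum_congr rfl fun y _ => ?_
          simp only [piDist]
          rw [← Finset.sum_mul]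
          field_simp
      _ = ∑ x, ∑ y, η x * deltaMat P α μJ x y * w y := Finset.sum_comm
      _ = ∑ x, η x * (D *ᵥ w) x := by
          refine Finset.sum_congr rfl fun x _ => ?_
          simp only [Matrix.mulVec, dotProduct, Finset.mul_sum, hDdef]
          refine Finset.sum_congr rfl fun y _ => ?_
          ring
  have hν0 : ∀ y, 0 ≤ piDist P α μJ η y := by
    intro y
    refine mul_nonneg (le_of_lt h1α) (Finset.sum_nonneg fun x _ => mul_nonneg (hη0 x) ?_)
    exact deltaMat_nonneg P μJ hP0 hP1 hα0' hα1 x y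
  -- componentwise bound: bellmanT J ≤ Jstar + Ds *ᵥ s
  have hQs0 : ∀ x y, (0:ℝ) ≤ Qs x y := by
    intro x y
    simp only [hQsdef, Matrix.smul_apply, polMat, Matrix.of_apply, smul_eq_mul]
    exact mul_nonneg hα0' (hP0 _ _ _)
  have hDs0 : ∀ x y, (0:ℝ) ≤ Ds x y := fun x y => deltaMat_nonneg P μs hP0 hP1 hα0' hα1 x y
  have hs0 : ∀ y, (0:ℝ) ≤ s y := fun y => le_max_right _ 0
  have hJle : ∀ y, J y ≤ bellmanT g P α J y + s y := by
    intro y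
    have := le_max_left (J y - bellmanT g P α J y) 0
    simp only [hsdef]
    linarith
  have hu_le : ∀ x, bellmanT g P α J x ≤ g x (μs x) + (Qs *ᵥ J) x := by
    intro x
    have h : bellmanT g P α J x ≤ g x (μs x) + α * ∑ x', P (μs x) x x' * J x' :=
      Finset.inf'_le _ (Finset.mem_univ (μs x))
    refine le_trans h (le_of_eq ?_)
    show g x (μs x) + α * ∑ x', P (μs x) x x' * J x' = g x (μs x) + (Qs *ᵥ J) x
    · 
          simp [Matrix.mulVec, dotProduct, polMat, Finset.mul_sum, mul_assoc, hQsdef]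
  have hkey : ∀ x, ((1 - Qs) *ᵥ (bellmanT g P α J)) x
      ≤ ((fun y => g y (μs y)) + (Qs *ᵥ s)) x := by
    intro x
    have h2 : (Qs *ᵥ J) x ≤ (Qs *ᵥ fun y => bellmanT g P α J y + s y) x :=
      mulVec_mono Qs hQs0 hJle x
    have h3 : (Qs *ᵥ fun y => bellmanT g P α J y + s y) x
        = (Qs *ᵥ bellmanT g P α J) x + (Qs *ᵥ s) x := by
      have : (fun y => bellmanT g P α J y + s y) = bellmanT g P α J + s := rfl
      rw [this, Matrix.mulVec_add, Pi.add_apply]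
    have h4 := hu_le x
    simp only [Matrix.sub_mulVec, Matrix.one_mulVec, Pi.sub_apply, Pi.add_apply]
    linarith
  have hg_star : (fun y => g y (μs y)) = (1 - Qs) *ᵥ Jstar := by
    funext y
    have h2 : g y (μs y) + (Qs *ᵥ Jstar) y = Jstar y := by
      rw [← polT_apply, congrFun hμs y, congrFun hJstar y]
    simp only [Matrix.sub_mulVec, Matrix.one_mulVec, Pi.sub_apply]
    linarith
  have hDQ : Ds * Qs = Ds - 1 := by
    have h := deltaMat_mul P μs hP0 hP1 hα0' hα1
    rw [mul_one_sub] at h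
    have h2 : Ds = 1 + Ds * Qs := sub_eq_iff_eq_add.mp h
    exact eq_sub_of_add_eq (by rw [add_comm, ← h2])
  have hbound : ∀ x, bellmanT g P α J x ≤ Jstar x + (Ds *ᵥ s) x := by
    intro x
    have h5 : (Ds *ᵥ ((1 - Qs) *ᵥ (bellmanT g P α J))) x
        ≤ (Ds *ᵥ ((fun y => g y (μs y)) + (Qs *ᵥ s))) x :=
      mulVec_mono Ds hDs0 hkey x
    rw [deltaMat_mulVec_cancel P μs hP0 hP1 hα0' hα1] at h5
    rw [Matrix.mulVec_add, hg_star, deltaMat_mulVec_cancel P μs hP0 hP1 hα0' hα1,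
      Matrix.mulVec_mulVec, hDQ, Matrix.sub_mulVec, Matrix.one_mulVec] at h5
    have := hs0 x
    simp only [Pi.add_apply, Pi.sub_apply] at h5
    linarith
  -- put everything together
  rw [part1, ← hswap]
  refine mul_le_mul_of_nonneg_left ?_ (by positivity)
  refine Finset.sum_le_sum fun y _ => ?_
  refine mul_le_mul_of_nonneg_left ?_ (hν0 y)
  have := hbound y
  linarith
end
end

section
/- For any J ∈ ℝ^𝒳 and any initial distribution η on 𝒳, with s = (J − TJ)^+, one has η^⊤(J − J*) ≤ (1/(1−α)) ν(η,J)^⊤ Δ* s, where Δ* = (I − α P_{μ*})^{−1}. -/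
open Finset Matrix

noncomputable section

section JmJAux

variable {X A : Type*} [Fintype X] [DecidableEq X]
variable {P : A → X → X → ℝ} {μ : X → A} {α : ℝ}

lemma JmJ.pow_nonneg (hP0 : ∀ a x x', 0 ≤ P a x x') (k : ℕ) (x y : X) :
    0 ≤ ((polMat P μ) ^ k) x y := by
  induction k generalizing x y with
  | zero => simp [Matrix.one_apply]; split <;> norm_num
  | succ n ih =>
    rw [pow_succ, Matrix.mul_apply]
    exact Finset.sum_nonneg fun z _ => mul_nonneg (ih x z) (hP0 _ _ _)

lemma JmJ.pow_rowsum (hP1 : ∀ a x, ∑ x', P a x x' = 1) (k : ℕ) (x : X) :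
    ∑ y, ((polMat P μ) ^ k) x y = 1 := by
  induction k generalizing x with
  | zero => simp [Matrix.one_apply]
  | succ n ih =>
    simp only [pow_succ, Matrix.mul_apply]
    rw [Finset.sum_comm]
    calc ∑ z, ∑ y, ((polMat P μ)^n) x z * (polMat P μ) z y
        = ∑ z, ((polMat P μ)^n) x z := by
          refine Finset.sum_congr rfl fun z _ => ?_
          rw [← Finset.mul_sum]
          have : ∑ y, polMat P μ z y = 1 := hP1 (μ z) z
          rw [this, mul_one]
      _ = 1 := ih x

lemma JmJ.pow_le_one (hP0 : ∀ a x x', 0 ≤ P a x x') (hP1 : ∀ a x, ∑ x', P a x x' = 1)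
    (k : ℕ) (x y : X) : ((polMat P μ) ^ k) x y ≤ 1 := by
  calc ((polMat P μ) ^ k) x y ≤ ∑ z, ((polMat P μ) ^ k) x z :=
        Finset.single_le_sum (fun z _ => JmJ.pow_nonneg hP0 k x z) (Finset.mem_univ y)
    _ = 1 := JmJ.pow_rowsum hP1 k x

lemma JmJ.smul_pow_apply (k : ℕ) (x y : X) :
    ((α • polMat P μ) ^ k) x y = α ^ k * ((polMat P μ) ^ k) x y := by
  rw [smul_pow]; rfl

lemma JmJ.summable_entry (hP0 : ∀ a x x', 0 ≤ P a x x') (hP1 : ∀ a x, ∑ x', P a x x' = 1)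
    (hα0 : 0 ≤ α) (hα1 : α < 1) (x y : X) :
    Summable fun k : ℕ => ((α • polMat P μ) ^ k) x y := by
  refine Summable.of_nonneg_of_le (fun k => ?_) (fun k => ?_)
    (summable_geometric_of_lt_one hα0 hα1)
  · rw [JmJ.smul_pow_apply]
    exact mul_nonneg (_root_.pow_nonneg hα0 k) (JmJ.pow_nonneg hP0 k x y)
  · rw [JmJ.smul_pow_apply]
    calc α ^ k * ((polMat P μ) ^ k) x y ≤ α ^ k * 1 :=
          mul_le_mul_of_nonneg_left (JmJ.pow_le_one hP0 hP1 k x y) (_root_.pow_nonneg hα0 k)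
      _ = α ^ k := mul_one _

lemma JmJ.summable_matrix (hP0 : ∀ a x x', 0 ≤ P a x x') (hP1 : ∀ a x, ∑ x', P a x x' = 1)
    (hα0 : 0 ≤ α) (hα1 : α < 1) :
    Summable fun k : ℕ => (α • polMat P μ) ^ k := by
  apply Pi.summable.2
  intro x
  exact Pi.summable.2 fun y => JmJ.summable_entry hP0 hP1 hα0 hα1 x y

lemma JmJ.delta_apply (hP0 : ∀ a x x', 0 ≤ P a x x') (hP1 : ∀ a x, ∑ x', P a x x' = 1)
    (hα0 : 0 ≤ α) (hα1 : α < 1) (x y : X) :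
    deltaMat P α μ x y = ∑' k : ℕ, α ^ k * ((polMat P μ) ^ k) x y := by
  unfold deltaMat
  have h1 : (∑' k : ℕ, (α • polMat P μ) ^ k) x = ∑' k : ℕ, ((α • polMat P μ) ^ k) x :=
    tsum_apply (JmJ.summable_matrix hP0 hP1 hα0 hα1)
  rw [h1,
    tsum_apply (Pi.summable.2 fun y => JmJ.summable_entry hP0 hP1 hα0 hα1 x y)]
  exact tsum_congr fun k => JmJ.smul_pow_apply k x y

lemma JmJ.delta_nonneg (hP0 : ∀ a x x', 0 ≤ P a x x') (hP1 : ∀ a x, ∑ x', P a x x' = 1)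
    (hα0 : 0 ≤ α) (hα1 : α < 1) (x y : X) : 0 ≤ deltaMat P α μ x y := by
  rw [JmJ.delta_apply hP0 hP1 hα0 hα1]
  exact tsum_nonneg fun k =>
    mul_nonneg (_root_.pow_nonneg hα0 k) (JmJ.pow_nonneg hP0 k x y)

lemma JmJ.mulVec_bound (hP0 : ∀ a x x', 0 ≤ P a x x') (hP1 : ∀ a x, ∑ x', P a x x' = 1)
    (u : X → ℝ) (k : ℕ) (x : X) :
    |((polMat P μ ^ k) *ᵥ u) x| ≤ ∑ y, |u y| := by
  simp only [Matrix.mulVec, dotProduct]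
  calc |∑ y, (polMat P μ ^ k) x y * u y| ≤ ∑ y, |(polMat P μ ^ k) x y * u y| :=
        Finset.abs_sum_le_sum_abs _ _
    _ ≤ ∑ y, |u y| := by
        refine Finset.sum_le_sum fun y _ => ?_
        rw [abs_mul, abs_of_nonneg (JmJ.pow_nonneg hP0 k x y)]
        calc (polMat P μ ^ k) x y * |u y| ≤ 1 * |u y| :=
              mul_le_mul_of_nonneg_right (JmJ.pow_le_one hP0 hP1 k x y) (abs_nonneg _)
          _ = |u y| := one_mul _

lemma JmJ.summable_f (hP0 : ∀ a x x', 0 ≤ P a x x') (hP1 : ∀ a x, ∑ x', P a x x' = 1)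
    (hα0 : 0 ≤ α) (hα1 : α < 1) (u : X → ℝ) (x : X) :
    Summable fun k : ℕ => α ^ k * ((polMat P μ ^ k) *ᵥ u) x := by
  refine Summable.of_norm_bounded (g := fun k => α ^ k * ∑ y, |u y|)
    ((summable_geometric_of_lt_one hα0 hα1).mul_right _) fun k => ?_
  rw [Real.norm_eq_abs, abs_mul, abs_of_nonneg (_root_.pow_nonneg hα0 k)]
  exact mul_le_mul_of_nonneg_left (JmJ.mulVec_bound hP0 hP1 u k x) (_root_.pow_nonneg hα0 k)

lemma JmJ.deltaMat_mulVec [Fintype A] (hP0 : ∀ a x x', 0 ≤ P a x x')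
    (hP1 : ∀ a x, ∑ x', P a x x' = 1)
    (hα0 : 0 ≤ α) (hα1 : α < 1) (u : X → ℝ) (x : X) :
    (deltaMat P α μ *ᵥ u) x = ∑' k : ℕ, α ^ k * ((polMat P μ ^ k) *ᵥ u) x := by
  have hsumy : ∀ y : X, Summable fun k : ℕ => α ^ k * (polMat P μ ^ k) x y * u y := by
    intro y
    have := (JmJ.summable_entry hP0 hP1 hα0 hα1 (μ := μ) x y).mul_right (u y)
    refine this.congr fun k => ?_
    rw [JmJ.smul_pow_apply]
  calc (deltaMat P α μ *ᵥ u) x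
      = ∑ y, deltaMat P α μ x y * u y := rfl
    _ = ∑ y, ∑' k : ℕ, α ^ k * (polMat P μ ^ k) x y * u y := by
        refine Finset.sum_congr rfl fun y _ => ?_
        rw [JmJ.delta_apply hP0 hP1 hα0 hα1, ← tsum_mul_right]
    _ = ∑' k : ℕ, ∑ y, α ^ k * (polMat P μ ^ k) x y * u y :=
        (Summable.tsum_finsetSum fun y _ => hsumy y).symm
    _ = ∑' k : ℕ, α ^ k * ((polMat P μ ^ k) *ᵥ u) x := by
        refine tsum_congr fun k => ?_
        simp only [Matrix.mulVec, dotProduct, Finset.mul_sum, mul_assoc]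

lemma JmJ.delta_inv [Fintype A] (hP0 : ∀ a x x', 0 ≤ P a x x')
    (hP1 : ∀ a x, ∑ x', P a x x' = 1)
    (hα0 : 0 ≤ α) (hα1 : α < 1) (u : X → ℝ) (x : X) :
    (deltaMat P α μ *ᵥ (fun y => u y - α * (polMat P μ *ᵥ u) y)) x = u x := by
  set Q := polMat P μ with hQ
  set f : ℕ → ℝ := fun k => α ^ k * ((Q ^ k) *ᵥ u) x with hf
  have hfs : Summable f := JmJ.summable_f hP0 hP1 hα0 hα1 u x
  have hfs1 : Summable fun k => f (k + 1) := (summable_nat_add_iff 1).2 hfs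
  rw [JmJ.deltaMat_mulVec hP0 hP1 hα0 hα1]
  have key : ∀ k : ℕ, α ^ k * ((Q ^ k) *ᵥ (fun y => u y - α * (Q *ᵥ u) y)) x
      = f k - f (k + 1) := by
    intro k
    have hv : (fun y => u y - α * (Q *ᵥ u) y) = u - α • (Q *ᵥ u) := by
      funext y; simp
    rw [hv, Matrix.mulVec_sub, Matrix.mulVec_smul]
    have h2 : Q ^ k *ᵥ (Q *ᵥ u) = (Q ^ (k + 1)) *ᵥ u := by
      rw [Matrix.mulVec_mulVec, ← pow_succ]
    rw [h2]
    simp only [Pi.sub_apply, Pi.smul_apply, smul_eq_mul, hf]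
    ring
  rw [tsum_congr key, Summable.tsum_sub hfs hfs1, Summable.tsum_eq_zero_add hfs]
  simp [hf, Matrix.one_mulVec]

end JmJAux

/-- with s = (J - TJ)^+, η^⊤(J - J*) ≤ (1/(1-α)) ν(η,J)^⊤ Δ* s. -/
theorem J_minus_Jstar_bound
    {X A : Type*} [Fintype X] [Nonempty X] [Fintype A] [Nonempty A] [DecidableEq X]
    (g : X → A → ℝ) (P : A → X → X → ℝ) (α : ℝ)
    (hα0 : 0 < α) (hα1 : α < 1)
    (hP0 : ∀ a x x', 0 ≤ P a x x') (hP1 : ∀ a x, ∑ x', P a x x' = 1)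
    (Jstar : X → ℝ) (hJstar : bellmanT g P α Jstar = Jstar)
    (μs : X → A) (hμs : polT g P α μs Jstar = bellmanT g P α Jstar)
    (J : X → ℝ) (μJ : X → A) (hμJ : polT g P α μJ J = bellmanT g P α J)
    (η : X → ℝ) (hη0 : ∀ x, 0 ≤ η x) (hη1 : ∑ x, η x = 1) :
    ∑ x, η x * (J x - Jstar x) ≤
      (1 / (1 - α)) * ∑ x, piDist P α μJ η x *
        (deltaMat P α μs *ᵥ (fun y => max (J y - bellmanT g P α J y) 0)) x :=
  by
  have hα0' : (0:ℝ) ≤ α := le_of_lt hα0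
  set s : X → ℝ := fun y => max (J y - bellmanT g P α J y) 0 with hs
  set d : X → ℝ := fun x => J x - Jstar x with hd
  set w : X → ℝ := deltaMat P α μs *ᵥ s with hw
  have hs0 : ∀ y, 0 ≤ s y := fun y => le_max_right _ _
  have hu_le : ∀ x, d x - α * (polMat P μs *ᵥ d) x ≤ s x := by
    intro x
    have hfix : g x (μs x) + α * ∑ y, P (μs x) x y * Jstar y = Jstar x := by
      have h := congrFun hμs x
      rw [hJstar] at h
      simpa [polT] using h
    have hQd : (polMat P μs *ᵥ d) x
        = (∑ y, P (μs x) x y * J y) - ∑ y, P (μs x) x y * Jstar y := by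
      simp [Matrix.mulVec, dotProduct, polMat, hd, mul_sub,
        Finset.sum_sub_distrib]
    have hTle : bellmanT g P α J x ≤ g x (μs x) + α * ∑ y, P (μs x) x y * J y :=
      Finset.inf'_le _ (Finset.mem_univ (μs x))
    have h2 : J x - bellmanT g P α J x ≤ s x := le_max_left _ _
    have key : d x - α * (polMat P μs *ᵥ d) x
        = J x - (g x (μs x) + α * ∑ y, P (μs x) x y * J y) := by
      rw [hQd]
      simp only [hd]
      linear_combination hfix
    linarith
  have hdel : ∀ (μ : X → A) (x y : X), 0 ≤ deltaMat P α μ x y := fun μ x y =>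
    JmJ.delta_nonneg hP0 hP1 hα0' hα1 x y
  have hdw : ∀ x, d x ≤ w x := by
    intro x
    have hid := JmJ.delta_inv (μ := μs) hP0 hP1 hα0' hα1 d x
    rw [← hid]
    show ∑ y, deltaMat P α μs x y * (d y - α * (polMat P μs *ᵥ d) y)
        ≤ ∑ y, deltaMat P α μs x y * s y
    exact Finset.sum_le_sum fun y _ =>
      mul_le_mul_of_nonneg_left (hu_le y) (hdel μs x y)
  have hw0 : ∀ x, 0 ≤ w x := by
    intro x
    show 0 ≤ ∑ y, deltaMat P α μs x y * s y
    exact Finset.sum_nonneg fun y _ => mul_nonneg (hdel μs x y) (hs0 y)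
  have hwW : ∀ x, w x ≤ (deltaMat P α μJ *ᵥ w) x := by
    intro x
    have h1 : ∀ y, ((1 : Matrix X X ℝ)) x y ≤ deltaMat P α μJ x y := by
      intro y
      rw [JmJ.delta_apply hP0 hP1 hα0' hα1]
      have hsum : Summable fun k : ℕ => α ^ k * ((polMat P μJ) ^ k) x y :=
        (JmJ.summable_entry hP0 hP1 hα0' hα1 x y).congr fun k =>
          JmJ.smul_pow_apply k x y
      have h0 := Summable.le_tsum hsum 0 fun k _ =>
        mul_nonneg (_root_.pow_nonneg hα0' k) (JmJ.pow_nonneg hP0 k x y)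
      simpa using h0
    calc w x = (1 *ᵥ w) x := by rw [Matrix.one_mulVec]
      _ = ∑ y, (1 : Matrix X X ℝ) x y * w y := rfl
      _ ≤ ∑ y, deltaMat P α μJ x y * w y :=
          Finset.sum_le_sum fun y _ =>
            mul_le_mul_of_nonneg_right (h1 y) (hw0 y)
      _ = (deltaMat P α μJ *ᵥ w) x := rfl
  have h1α : (1:ℝ) - α ≠ 0 := by linarith
  have hRHS : (1 / (1 - α)) * ∑ x, piDist P α μJ η x * w x
      = ∑ x0, η x0 * (deltaMat P α μJ *ᵥ w) x0 := by
    simp only [piDist]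
    rw [Finset.mul_sum]
    calc ∑ x, 1 / (1 - α) * (((1 - α) * ∑ x0, η x0 * deltaMat P α μJ x0 x) * w x)
        = ∑ x, ∑ x0, η x0 * deltaMat P α μJ x0 x * w x := by
          refine Finset.sum_congr rfl fun x _ => ?_
          rw [show (1:ℝ) / (1 - α) * (((1 - α) * ∑ x0, η x0 * deltaMat P α μJ x0 x) * w x)
              = (∑ x0, η x0 * deltaMat P α μJ x0 x) * w x from by field_simp,
            Finset.sum_mul]
      _ = ∑ x0, ∑ x, η x0 * deltaMat P α μJ x0 x * w x := Finset.sum_comm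
      _ = ∑ x0, η x0 * (deltaMat P α μJ *ᵥ w) x0 := by
          refine Finset.sum_congr rfl fun x0 _ => ?_
          show _ = η x0 * ∑ x, deltaMat P α μJ x0 x * w x
          rw [Finset.mul_sum]
          exact Finset.sum_congr rfl fun x _ => mul_assoc _ _ _
  calc ∑ x, η x * (J x - Jstar x) = ∑ x, η x * d x := rfl
    _ ≤ ∑ x, η x * w x :=
        Finset.sum_le_sum fun x _ => mul_le_mul_of_nonneg_left (hdw x) (hη0 x)
    _ ≤ ∑ x, η x * (deltaMat P α μJ *ᵥ w) x :=
        Finset.sum_le_sum fun x _ => mul_le_mul_of_nonneg_left (hwW x) (hη0 x)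
    _ = (1 / (1 - α)) * ∑ x, piDist P α μJ η x * w x := hRHS.symm
end
end
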